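/- Let f, g : ℕ → ℝ. For n ∈ ℕ set Γₙ(f) = ∑_{k < n} (f k)^2, Γₙ(g) = ∑_{k < n} (g k)^2, Γₙ(f,g) = Γₙ(f)·Γₙ(g) − (∑_{k < n} f k · g k)^2 (the Gram determinant of the truncations), and Δₙ(f,g) = (Γₙ(f) + Γₙ(f,g)) / (Γₙ(g) + 1). Assume that the series ∑ (f k)^2 diverges, i.e., Γₙ(f) → ∞. Then Δₙ(f,g) → ∞ as n → ∞ in each of the following cases: (a) ∑ (g k)^2 < ∞; (b) ∑ (g k)^2 = ∞ and Γₙ(f)/Γₙ(g) → ∞; (c) ∑ (g k)^2 = ∞ and for every real s ≠ 0 the series ∑ (f k + s · g k)^2 diverges. -/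

import Mathlib

open Filter Finset

noncomputable def Dd (f g : ℕ → ℝ) (n : ℕ) : ℝ :=
  ((∑ k ∈ range n, f k ^ 2) +
    ((∑ k ∈ range n, f k ^ 2) * (∑ k ∈ range n, g k ^ 2)
      - (∑ k ∈ range n, f k * g k) ^ 2)) /
  ((∑ k ∈ range n, g k ^ 2) + 1)

lemma expandSum (f g : ℕ → ℝ) (n : ℕ) (s : ℝ) :
    ∑ k ∈ range n, (f k + s * g k) ^ 2 =
      (∑ k ∈ range n, f k ^ 2) + 2 * s * (∑ k ∈ range n, f k * g k)
        + s ^ 2 * (∑ k ∈ range n, g k ^ 2) := by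
  rw [mul_sum, mul_sum, ← sum_add_distrib, ← sum_add_distrib]
  exact sum_congr rfl fun k _ => by ring

lemma sq_sum_nonneg (h : ℕ → ℝ) (n : ℕ) : (0:ℝ) ≤ ∑ k ∈ range n, h k ^ 2 :=
  sum_nonneg fun k _ => sq_nonneg _

lemma Bpos (g : ℕ → ℝ) (n : ℕ) : (0:ℝ) < (∑ k ∈ range n, g k ^ 2) + 1 := by
  have := sq_sum_nonneg g n; linarith

/-- `Dd` is at most the value of the quadratic at any `s`. -/
lemma Dd_le (f g : ℕ → ℝ) (n : ℕ) (s : ℝ) :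
    Dd f g n ≤ (∑ k ∈ range n, (f k + s * g k) ^ 2) + s ^ 2 := by
  set A := ∑ k ∈ range n, f k ^ 2
  set B := ∑ k ∈ range n, g k ^ 2
  set C := ∑ k ∈ range n, f k * g k
  have hB : (0:ℝ) < B + 1 := Bpos g n
  rw [Dd, expandSum, div_le_iff₀ hB]
  nlinarith [sq_nonneg (s * (B + 1) + C), sq_nonneg s]

/-- `Dd` equals the value of the quadratic at the minimizer. -/
lemma Dd_eq (f g : ℕ → ℝ) (n : ℕ) :
    Dd f g n =
      (∑ k ∈ range n, (f k + (-(∑ k ∈ range n, f k * g k) /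
          ((∑ k ∈ range n, g k ^ 2) + 1)) * g k) ^ 2) +
        (-(∑ k ∈ range n, f k * g k) / ((∑ k ∈ range n, g k ^ 2) + 1)) ^ 2 := by
  have hB : ((∑ k ∈ range n, g k ^ 2) + 1) ≠ 0 := (Bpos g n).ne'
  rw [Dd, expandSum]
  field_simp
  ring

lemma Dd_mono (f g : ℕ → ℝ) : Monotone (Dd f g) := by
  intro m n hmn
  set s := -(∑ k ∈ range n, f k * g k) / ((∑ k ∈ range n, g k ^ 2) + 1) with hs
  calc Dd f g m ≤ (∑ k ∈ range m, (f k + s * g k) ^ 2) + s ^ 2 := Dd_le f g m s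
    _ ≤ (∑ k ∈ range n, (f k + s * g k) ^ 2) + s ^ 2 := by
        gcongr
    _ = Dd f g n := (Dd_eq f g n).symm

lemma Dd_ge (f g : ℕ → ℝ) (n : ℕ) :
    (∑ k ∈ range n, f k ^ 2) / ((∑ k ∈ range n, g k ^ 2) + 1) ≤ Dd f g n := by
  set A := ∑ k ∈ range n, f k ^ 2
  set B := ∑ k ∈ range n, g k ^ 2
  set C := ∑ k ∈ range n, f k * g k
  have hB : (0:ℝ) < B + 1 := Bpos g n
  have hCS : C ^ 2 ≤ A * B := sum_mul_sq_le_sq_mul_sq _ _ _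
  rw [Dd, div_le_div_iff₀ hB hB]
  nlinarith

theorem stmt10 (f g : ℕ → ℝ)
    (hf : Tendsto (fun n => ∑ k ∈ range n, f k ^ 2) atTop atTop)
    (h : Summable (fun k => g k ^ 2) ∨
        (¬ Summable (fun k => g k ^ 2) ∧
          Tendsto (fun n => (∑ k ∈ range n, f k ^ 2) / ∑ k ∈ range n, g k ^ 2)
            atTop atTop) ∨
        (¬ Summable (fun k => g k ^ 2) ∧
          ∀ s : ℝ, s ≠ 0 → ¬ Summable (fun k => (f k + s * g k) ^ 2))) :
    Tendsto (fun n =>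
        ((∑ k ∈ range n, f k ^ 2) +
          ((∑ k ∈ range n, f k ^ 2) * (∑ k ∈ range n, g k ^ 2)
            - (∑ k ∈ range n, f k * g k) ^ 2)) /
        ((∑ k ∈ range n, g k ^ 2) + 1))
      atTop atTop := by
  show Tendsto (Dd f g) atTop atTop
  rcases h with hg | ⟨hg, hb⟩ | ⟨hg, hc⟩
  · -- case (a) : g² summable
    have hS : ∀ n, (∑ k ∈ range n, g k ^ 2) ≤ ∑' k, g k ^ 2 := fun n =>
      Summable.sum_le_tsum _ (fun k _ => sq_nonneg _) hg
    have hS0 : (0:ℝ) < (∑' k, g k ^ 2) + 1 := by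
      have : (0:ℝ) ≤ ∑' k, g k ^ 2 := tsum_nonneg (fun k => sq_nonneg (g k)); linarith
    have h1 : Tendsto (fun n => (∑ k ∈ range n, f k ^ 2) / ((∑' k, g k ^ 2) + 1))
        atTop atTop := hf.atTop_div_const hS0
    refine tendsto_atTop_mono (fun n => ?_) h1
    calc (∑ k ∈ range n, f k ^ 2) / ((∑' k, g k ^ 2) + 1)
        ≤ (∑ k ∈ range n, f k ^ 2) / ((∑ k ∈ range n, g k ^ 2) + 1) := by
          apply div_le_div_of_nonneg_left (sq_sum_nonneg f n) (Bpos g n)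
          linarith [hS n]
      _ ≤ Dd f g n := Dd_ge f g n
  · -- case (b)
    have hB : Tendsto (fun n => ∑ k ∈ range n, g k ^ 2) atTop atTop :=
      (not_summable_iff_tendsto_nat_atTop_of_nonneg (fun k => sq_nonneg _)).1 hg
    have h1 : Tendsto (fun n =>
        ((∑ k ∈ range n, f k ^ 2) / ∑ k ∈ range n, g k ^ 2) / 2) atTop atTop :=
      hb.atTop_div_const two_pos
    refine tendsto_atTop_mono' atTop ?_ h1
    filter_upwards [hB.eventually_ge_atTop 1] with n hn
    have hA := sq_sum_nonneg f n
    calc ((∑ k ∈ range n, f k ^ 2) / ∑ k ∈ range n, g k ^ 2) / 2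
        = (∑ k ∈ range n, f k ^ 2) / (2 * ∑ k ∈ range n, g k ^ 2) := by
          rw [div_div]; ring_nf
      _ ≤ (∑ k ∈ range n, f k ^ 2) / ((∑ k ∈ range n, g k ^ 2) + 1) := by
          apply div_le_div_of_nonneg_left hA (Bpos g n); linarith
      _ ≤ Dd f g n := Dd_ge f g n
  · -- case (c)
    rcases tendsto_of_monotone (Dd_mono f g) with ht | ⟨l, hl⟩
    · exact ht
    exfalso
    have hM : ∀ n, Dd f g n ≤ l := fun n => Monotone.ge_of_tendsto (Dd_mono f g) hl n
    set K : ℕ → Set ℝ := fun n =>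
      {s | s ^ 2 ≤ l ∧ (∑ k ∈ range n, (f k + s * g k) ^ 2) ≤ l} with hK
    have hclosed : ∀ n, IsClosed (K n) := by
      intro n
      have c1 : Continuous fun s : ℝ => s ^ 2 := by continuity
      have c2 : Continuous fun s : ℝ => ∑ k ∈ range n, (f k + s * g k) ^ 2 := by
        apply continuous_finset_sum; intro k _; continuity
      exact IsClosed.inter (isClosed_le c1 continuous_const)
        (isClosed_le c2 continuous_const)
    have hne : ∀ n, (K n).Nonempty := by
      intro n
      set s := -(∑ k ∈ range n, f k * g k) / ((∑ k ∈ range n, g k ^ 2) + 1) with hsdef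
      have h1 : (∑ k ∈ range n, (f k + s * g k) ^ 2) + s ^ 2 ≤ l :=
        (Dd_eq f g n) ▸ hM n
      have h2 : (0:ℝ) ≤ ∑ k ∈ range n, (f k + s * g k) ^ 2 :=
        sum_nonneg fun k _ => sq_nonneg _
      have h3 : (0:ℝ) ≤ s ^ 2 := sq_nonneg s
      exact ⟨s, by linarith, by linarith⟩
    have hsub : ∀ n, K (n + 1) ⊆ K n := by
      intro n s hs
      refine ⟨hs.1, le_trans ?_ hs.2⟩
      exact sum_le_sum_of_subset_of_nonneg (range_subset_range.2 (Nat.le_succ n))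
        fun k _ _ => sq_nonneg _
    have hcpt : IsCompact (K 0) := by
      have hsubI : K 0 ⊆ Set.Icc (-Real.sqrt l) (Real.sqrt l) := by
        intro s hs
        exact abs_le.1 (Real.abs_le_sqrt hs.1)
      exact IsCompact.of_isClosed_subset isCompact_Icc (hclosed 0) hsubI
    obtain ⟨s, hsmem⟩ :=
      IsCompact.nonempty_iInter_of_sequence_nonempty_isCompact_isClosed K hsub hne
        hcpt hclosed
    simp only [Set.mem_iInter] at hsmem
    by_cases hs0 : s = 0
    · subst hs0
      obtain ⟨n, hn⟩ := (hf.eventually_gt_atTop l).exists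
      have hb := (hsmem n).2
      simp only [zero_mul, add_zero] at hb
      linarith
    · exact hc s hs0
        (summable_of_sum_range_le (fun k => sq_nonneg _) fun n => (hsmem n).2)
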